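/- Two words of L_{W,ε} that lead a correct Wε-additive Basic-Counting algorithm to the same state yield a contradiction: if s¹ = w₀¹⋯w_{z−1}¹ and s² = w₀¹⋯w_{z−1}² differ, let t be the largest index with w_t¹ ≠ w_t², and pad both with 0^{(t)ℓ} zeros (ℓ = ⌊2Wε+1⌋); then the counts of 1's in the last W bits of the two padded words differ by exactly ℓ > 2Wε, so no single query answer can be within Wε of both. -/

import Mathlib

lemma aux_drop_flatMap (ℓ t : ℕ) (l : List Bool) :
    (l.flatMap (fun b => List.replicate ℓ b)).drop (t * ℓ) =
      (l.drop t).flatMap (fun b => List.replicate ℓ b) := by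
  induction t generalizing l with
  | zero => simp
  | succ t ih =>
    cases l with
    | nil => simp
    | cons a l =>
      rw [List.flatMap_cons, Nat.succ_mul, Nat.add_comm,
        show (ℓ + t * ℓ) = (List.replicate ℓ a).length + t * ℓ by simp,
        List.drop_length_add_append, ih, List.drop_succ_cons]

lemma aux_len_flatMap (ℓ : ℕ) (l : List Bool) :
    (l.flatMap (fun b => List.replicate ℓ b)).length = l.length * ℓ := by
  induction l with
  | nil => simp
  | cons a l ih => simp [ih, Nat.succ_mul, Nat.add_comm]

lemma aux_count_flatMap (ℓ : ℕ) (l : List Bool) :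
    (l.flatMap (fun b => List.replicate ℓ b)).count true = ℓ * l.count true := by
  induction l with
  | nil => simp
  | cons a l ih =>
    rw [List.flatMap_cons, List.count_append, ih, List.count_cons]
    cases a <;> simp [List.count_replicate, Nat.mul_add, Nat.add_comm]


/-- The combinatorial core of the lower bound: take two words of
`L_{W,ε}` (concatenations of `z = ⌊W/ℓ⌋` blocks, each `0^ℓ` or `1^ℓ`, `ℓ = ⌊2Wε + 1⌋`,
encoded by block-choice functions `c₁ c₂ : Fin z → Bool`) whose last differing block
index is `t`. Pad both with the same suffix of zeros of the appropriate length (so that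
block `t` is aligned as the oldest block fully inside the window of size `W`). Then the
counts of `1`'s in the last `W` bits of the two padded words differ by exactly `ℓ`, and
`ℓ > 2Wε` — so no single query answer can be within `Wε` of both counts. -/
theorem stmt_18 (W t : ℕ) (ε : ℝ) (hW : 0 < W) (hε : 0 ≤ ε) :
    let ℓ : ℕ := ⌊2 * (W : ℝ) * ε + 1⌋₊
    let z : ℕ := W / ℓ
    ∀ (ht : t < z) (c₁ c₂ : Fin z → Bool),
      c₁ ⟨t, ht⟩ ≠ c₂ ⟨t, ht⟩ →
      (∀ τ : Fin z, t < (τ : ℕ) → c₁ τ = c₂ τ) →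
      let u := fun c : Fin z → Bool =>
        (List.ofFn c).flatMap (fun b => List.replicate ℓ b) ++
          List.replicate (W - (z - t) * ℓ) false
      ((((u c₁).drop ((u c₁).length - W)).count true : ℤ) -
            (((u c₂).drop ((u c₂).length - W)).count true : ℤ)).natAbs = ℓ ∧
        2 * (W : ℝ) * ε < (ℓ : ℝ) := by
  intro ℓ z ht c₁ c₂ hne hagree u
  -- basic numeric facts
  have hℓε : 2 * (W : ℝ) * ε < (ℓ : ℝ) := by
    have := Nat.sub_one_lt_floor (2 * (W : ℝ) * ε + 1)
    simpa [ℓ] using this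
  have hℓpos : 0 < ℓ := by
    have : (0 : ℝ) ≤ 2 * (W : ℝ) * ε := by positivity
    have h1 : (2 : ℝ) * (W : ℝ) * ε < (ℓ : ℝ) := hℓε
    exact_mod_cast Nat.cast_pos.mp (lt_of_le_of_lt this h1)
  have hzℓ : z * ℓ ≤ W := Nat.div_mul_le_self W ℓ
  -- length computation
  have hlen : ∀ c : Fin z → Bool, (u c).length - W = t * ℓ := by
    intro c
    have : (u c).length = z * ℓ + (W - (z - t) * ℓ) := by
      rw [show u c = (List.ofFn c).flatMap (fun b => List.replicate ℓ b) ++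
          List.replicate (W - (z - t) * ℓ) false from rfl, List.length_append,
        aux_len_flatMap, List.length_ofFn, List.length_replicate]
    rw [this]
    have h1 : (z - t) * ℓ + t * ℓ = z * ℓ := by
      rw [← Nat.add_mul]; congr 1; omega
    omega
  -- count computation
  have hcount : ∀ c : Fin z → Bool,
      ((u c).drop ((u c).length - W)).count true =
        ℓ * ((List.ofFn c).drop t).count true := by
    intro c
    rw [hlen c]
    have htℓ : t * ℓ ≤ ((List.ofFn c).flatMap (fun b => List.replicate ℓ b)).length := by
      rw [aux_len_flatMap, List.length_ofFn]
      exact Nat.mul_le_mul_right ℓ (le_of_lt ht)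
    rw [show (u c) = (List.ofFn c).flatMap (fun b => List.replicate ℓ b) ++
          List.replicate (W - (z - t) * ℓ) false from rfl,
      List.drop_append_of_le_length htℓ, List.count_append,
      aux_drop_flatMap, aux_count_flatMap]
    simp [List.count_replicate]
  -- the dropped ofFn lists: head differs, tails agree
  have hofFn : ∀ c : Fin z → Bool,
      (List.ofFn c).drop t = c ⟨t, ht⟩ :: (List.ofFn c).drop (t + 1) := by
    intro c
    rw [List.drop_eq_getElem_cons (by simpa using ht)]
    simp
  have htail : (List.ofFn c₁).drop (t + 1) = (List.ofFn c₂).drop (t + 1) := by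
    apply List.ext_getElem
    · simp
    · intro i h1 h2
      rw [List.getElem_drop, List.getElem_drop]
      have hi : t + 1 + i < z := by
        have := h1; simp at this; omega
      rw [List.getElem_ofFn, List.getElem_ofFn]
      exact hagree ⟨t + 1 + i, by simpa using hi⟩ (by simp; omega)
  constructor
  · rw [hcount c₁, hcount c₂, hofFn c₁, hofFn c₂, htail,
      List.count_cons, List.count_cons]
    set m := ((List.ofFn c₂).drop (t + 1)).count true
    rcases Bool.eq_false_or_eq_true (c₁ ⟨t, ht⟩) with h1 | h1 <;>
      rcases Bool.eq_false_or_eq_true (c₂ ⟨t, ht⟩) with h2 | h2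
    · exact absurd (h1.trans h2.symm) hne
    · simp [h1, h2, Nat.mul_add]
    · simp [h1, h2, Nat.mul_add]
    · exact absurd (h1.trans h2.symm) hne
  · exact hℓε
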